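/- If two AMA menus M1 and M2, both indexed by {0,1,...,K}, are ε-reducible, then they are ε-mode-connected; moreover, the continuous path connecting them can be taken piecewise linear with only five linear pieces. -/

import Mathlib

open MeasureTheory Finset

namespace AMA

/-- An AMA menu: for each of the `K+1` option indices, an allocation
`x : Fin m → Fin n → ℝ` (buyer `i` receives `x i j` of item `j`) and a boost `β : ℝ`. -/
abbrev Menu (m n K : ℕ) := Fin (K + 1) → (Fin m → Fin n → ℝ) × ℝ

/-- Inner product of a valuation and an allocation. -/
def dotp {n : ℕ} (v x : Fin n → ℝ) : ℝ := ∑ j, v j * x j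

/-- A valid AMA menu: entries in `[0,1]`, each item allocated at most once in total,
default option `(0, 0)`. -/
def IsMenu {m n K : ℕ} (M : Menu m n K) : Prop :=
  (∀ k i j, 0 ≤ (M k).1 i j ∧ (M k).1 i j ≤ 1) ∧
  (∀ k j, ∑ i, (M k).1 i j ≤ 1) ∧ M 0 = 0

/-- The set of valuation profiles: each buyer's valuation lies in `[0,1]^n` with
coordinate sum at most `1`. -/
def VP (m n : ℕ) : Set (Fin m → Fin n → ℝ) :=
  {v | ∀ i, (∀ j, 0 ≤ v i j ∧ v i j ≤ 1) ∧ ∑ j, v i j ≤ 1}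

/-- Boosted welfare of option `k` at the valuation profile `v`. -/
def bw {m n K : ℕ} (M : Menu m n K) (v : Fin m → Fin n → ℝ) (k : Fin (K + 1)) : ℝ :=
  (∑ i, dotp (v i) ((M k).1 i)) + (M k).2

/-- Boosted welfare of option `k` at `v` when buyer `i` is omitted. -/
def bwWo {m n K : ℕ} (M : Menu m n K) (v : Fin m → Fin n → ℝ) (i : Fin m)
    (k : Fin (K + 1)) : ℝ :=
  (∑ l ∈ Finset.univ.erase i, dotp (v l) ((M k).1 l)) + (M k).2

/-- Maximal boosted welfare `W(v)`. -/
noncomputable def W {m n K : ℕ} (M : Menu m n K) (v : Fin m → Fin n → ℝ) : ℝ :=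
  Finset.univ.sup' Finset.univ_nonempty (bw M v)

/-- Maximal boosted welfare `W(v₋ᵢ)` with buyer `i` omitted. -/
noncomputable def WWo {m n K : ℕ} (M : Menu m n K) (v : Fin m → Fin n → ℝ)
    (i : Fin m) : ℝ :=
  Finset.univ.sup' Finset.univ_nonempty (bwWo M v i)

/-- The minimal boost among boosted-welfare-maximizing options (tie-breaking in favor
of maximal total payment). -/
noncomputable def minBeta {m n K : ℕ} (M : Menu m n K) (v : Fin m → Fin n → ℝ) : ℝ :=
  sInf {b : ℝ | ∃ k, bw M v k = W M v ∧ b = (M k).2}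

/-- Total payment collected at `v`:
`∑ i W(v₋ᵢ) − (m−1) W(v) − min {β k : W_k(v) = W(v)}`. -/
noncomputable def pay {m n K : ℕ} (M : Menu m n K) (v : Fin m → Fin n → ℝ) : ℝ :=
  (∑ i, WWo M v i) - ((m : ℝ) - 1) * W M v - minBeta M v

/-- Expected revenue of the AMA menu `M` under the profile distribution `F`. -/
noncomputable def Rev {m n K : ℕ} (F : Measure (Fin m → Fin n → ℝ))
    (M : Menu m n K) : ℝ :=
  ∫ v, pay M v ∂F

/-- Option-wise convex combination of two AMA menus. -/
noncomputable def comb {m n K : ℕ} (lam : ℝ) (M M' : Menu m n K) : Menu m n K :=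
  fun k => (fun i j => lam * (M k).1 i j + (1 - lam) * (M' k).1 i j,
            lam * (M k).2 + (1 - lam) * (M' k).2)

/-- The event that the option subset `K'` suffices at `v`: some boosted-welfare
maximizer with minimal boost lies in `K'`, and for every buyer `i` some maximizer of the
boosted welfare of `v₋ᵢ` lies in `K'`. -/
def GoodEvent {m n K : ℕ} (M : Menu m n K) (K' : Finset (Fin (K + 1)))
    (v : Fin m → Fin n → ℝ) : Prop :=
  (∃ k ∈ K', bw M v k = W M v ∧ (M k).2 = minBeta M v) ∧
  ∀ i : Fin m, ∃ k ∈ K', bwWo M v i k = WWo M v i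

/-- `M` is `ε`-reducible: some subset `K'` of options containing the default option, of
cardinality at most `√(K+1)`, whose good event has probability at least `1 - ε/m`. -/
def Reducible {m n K : ℕ} (F : Measure (Fin m → Fin n → ℝ)) (M : Menu m n K)
    (ε : ℝ) : Prop :=
  ∃ K' : Finset (Fin (K + 1)), 0 ∈ K' ∧ (K'.card : ℝ) ≤ Real.sqrt (K + 1) ∧
    (F {v | GoodEvent M K' v}).toReal ≥ 1 - ε / (m : ℝ)

/-- `M₁` and `M₂` are `ε`-mode-connected by a piecewise linear path with `pieces`
linear pieces, all whose menus are valid AMA menus and have revenue at least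
`min (Rev M₁) (Rev M₂) - ε`. -/
def PLConnected {m n K : ℕ} (F : Measure (Fin m → Fin n → ℝ)) (M₁ M₂ : Menu m n K)
    (ε : ℝ) (pieces : ℕ) : Prop :=
  ∃ P : Fin (pieces + 1) → Menu m n K, P 0 = M₁ ∧ P (Fin.last pieces) = M₂ ∧
    (∀ i, IsMenu (P i)) ∧
    ∀ i : Fin pieces, ∀ lam ∈ Set.Icc (0 : ℝ) 1,
      Rev F (comb lam (P i.castSucc) (P i.succ)) ≥ min (Rev F M₁) (Rev F M₂) - ε

variable {m n K : ℕ}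

/-! ### Basic lemmas -/

lemma bw_le_W (M : Menu m n K) (v) (k) : bw M v k ≤ W M v :=
  Finset.le_sup' _ (Finset.mem_univ k)

lemma W_le {M : Menu m n K} {v} {c : ℝ} (h : ∀ k, bw M v k ≤ c) : W M v ≤ c :=
  Finset.sup'_le _ _ fun k _ => h k

lemma exists_bw_eq_W (M : Menu m n K) (v) : ∃ k, bw M v k = W M v := by
  obtain ⟨k, -, hk⟩ := Finset.exists_mem_eq_sup' (Finset.univ_nonempty) (bw M v)
  exact ⟨k, hk.symm⟩

lemma bwWo_le_WWo (M : Menu m n K) (v) (i) (k) : bwWo M v i k ≤ WWo M v i :=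
  Finset.le_sup' _ (Finset.mem_univ k)

lemma WWo_le {M : Menu m n K} {v} {i} {c : ℝ} (h : ∀ k, bwWo M v i k ≤ c) : WWo M v i ≤ c :=
  Finset.sup'_le _ _ fun k _ => h k

lemma exists_bwWo_eq_WWo (M : Menu m n K) (v) (i) : ∃ k, bwWo M v i k = WWo M v i := by
  obtain ⟨k, -, hk⟩ := Finset.exists_mem_eq_sup' (Finset.univ_nonempty) (bwWo M v i)
  exact ⟨k, hk.symm⟩

lemma betaSet_finite (M : Menu m n K) (v) :
    {b : ℝ | ∃ k, bw M v k = W M v ∧ b = (M k).2}.Finite :=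
  (Set.finite_range fun k => (M k).2).subset (fun _ hb => by
    obtain ⟨k, -, hb⟩ := hb; exact ⟨k, hb.symm⟩)

lemma betaSet_nonempty (M : Menu m n K) (v) :
    {b : ℝ | ∃ k, bw M v k = W M v ∧ b = (M k).2}.Nonempty := by
  obtain ⟨k, hk⟩ := exists_bw_eq_W M v
  exact ⟨(M k).2, k, hk, rfl⟩

lemma minBeta_le {M : Menu m n K} {v} {k} (h : bw M v k = W M v) :
    minBeta M v ≤ (M k).2 :=
  csInf_le (betaSet_finite M v).bddBelow ⟨k, h, rfl⟩

lemma le_minBeta {M : Menu m n K} {v} {c : ℝ}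
    (h : ∀ k, bw M v k = W M v → c ≤ (M k).2) : c ≤ minBeta M v :=
  le_csInf (betaSet_nonempty M v) (fun b hb => by
    obtain ⟨k, h1, h2⟩ := hb; exact h2 ▸ h k h1)

lemma minBeta_mem (M : Menu m n K) (v) :
    ∃ k, bw M v k = W M v ∧ (M k).2 = minBeta M v := by
  have := (betaSet_nonempty M v).csInf_mem (betaSet_finite M v)
  obtain ⟨k, h1, h2⟩ := this
  exact ⟨k, h1, h2.symm⟩

lemma bwWo_eq (M : Menu m n K) (v) (i) (k) :
    bwWo M v i k = bw M v k - dotp (v i) ((M k).1 i) := by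
  have h := Finset.sum_erase_add Finset.univ (fun l => dotp (v l) ((M k).1 l))
    (Finset.mem_univ i)
  unfold bwWo bw
  linarith

lemma dotp_nonneg {v x : Fin n → ℝ} (hv : ∀ j, 0 ≤ v j) (hx : ∀ j, 0 ≤ x j) :
    0 ≤ dotp v x :=
  Finset.sum_nonneg fun j _ => mul_nonneg (hv j) (hx j)

lemma dotp_le_one {v x : Fin n → ℝ} (hv : ∀ j, 0 ≤ v j) (hs : ∑ j, v j ≤ 1)
    (hx : ∀ j, x j ≤ 1) : dotp v x ≤ 1 :=
  (Finset.sum_le_sum fun j _ => mul_le_of_le_one_right (hv j) (hx j)).trans hs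

lemma pay_eq {M : Menu m n K} {v} {k} (hk : bw M v k = W M v)
    (hb : (M k).2 = minBeta M v) :
    pay M v = ∑ i, (WWo M v i - bwWo M v i k) := by
  have h2 : ∑ i : Fin m, dotp (v i) ((M k).1 i) = bw M v k - (M k).2 := by
    unfold bw; ring
  have h3 : ∑ i : Fin m, bwWo M v i k = ((m : ℝ) - 1) * W M v + minBeta M v := by
    simp only [bwWo_eq M v _ k]
    rw [Finset.sum_sub_distrib, h2, Finset.sum_const, Finset.card_univ, Fintype.card_fin,
      nsmul_eq_mul, hk, hb]
    ring
  unfold pay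
  rw [Finset.sum_sub_distrib, h3]
  ring

lemma pay_nonneg {M : Menu m n K} {v} : 0 ≤ pay M v := by
  obtain ⟨k, hk, hb⟩ := minBeta_mem M v
  rw [pay_eq hk hb]
  exact Finset.sum_nonneg fun i _ => sub_nonneg.mpr (bwWo_le_WWo M v i k)

lemma pay_le {M : Menu m n K} {v} (hM : IsMenu M) (hv : v ∈ VP m n) :
    pay M v ≤ (m : ℝ) := by
  obtain ⟨k, hk, hb⟩ := minBeta_mem M v
  rw [pay_eq hk hb]
  have hterm : ∀ i ∈ Finset.univ, WWo M v i - bwWo M v i k ≤ 1 := by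
    intro i _
    obtain ⟨k', hk'⟩ := exists_bwWo_eq_WWo M v i
    have e1 : bwWo M v i k' ≤ W M v := by
      rw [bwWo_eq]
      have h1 := bw_le_W M v k'
      have h2 : 0 ≤ dotp (v i) ((M k').1 i) :=
        dotp_nonneg (fun j => ((hv i).1 j).1) (fun j => (hM.1 k' i j).1)
      linarith
    have e2 : W M v - 1 ≤ bwWo M v i k := by
      rw [bwWo_eq, hk]
      have h2 : dotp (v i) ((M k).1 i) ≤ 1 :=
        dotp_le_one (fun j => ((hv i).1 j).1) (hv i).2 (fun j => (hM.1 k i j).2)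
      linarith
    rw [← hk']
    linarith
  calc ∑ i, (WWo M v i - bwWo M v i k) ≤ ∑ _i : Fin m, (1 : ℝ) :=
        Finset.sum_le_sum hterm
    _ = m := by simp



/-! ### Convex combination lemmas -/

lemma comb_zero (M M' : Menu m n K) : comb 0 M M' = M' := by
  funext k
  unfold comb
  refine Prod.ext ?_ ?_
  · funext i j; simp
  · simp

lemma comb_one (M M' : Menu m n K) : comb 1 M M' = M := by
  funext k
  unfold comb
  refine Prod.ext ?_ ?_
  · funext i j; simp
  · simp

lemma comb_self (lam : ℝ) (M : Menu m n K) : comb lam M M = M := by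
  funext k
  unfold comb
  refine Prod.ext ?_ ?_
  · funext i j; simp; ring
  · simp; ring

lemma comb_snd (lam : ℝ) (M M' : Menu m n K) (k) :
    ((comb lam M M') k).2 = lam * (M k).2 + (1 - lam) * (M' k).2 := rfl

lemma dotp_comb (lam : ℝ) (v a b : Fin n → ℝ) :
    dotp v (fun j => lam * a j + (1 - lam) * b j) = lam * dotp v a + (1 - lam) * dotp v b := by
  unfold dotp
  rw [Finset.mul_sum, Finset.mul_sum, ← Finset.sum_add_distrib]
  exact Finset.sum_congr rfl fun j _ => by ring

lemma bw_comb (lam : ℝ) (M M' : Menu m n K) (v) (k) :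
    bw (comb lam M M') v k = lam * bw M v k + (1 - lam) * bw M' v k := by
  unfold bw
  have h : ∀ i, dotp (v i) (((comb lam M M') k).1 i) =
      lam * dotp (v i) ((M k).1 i) + (1 - lam) * dotp (v i) ((M' k).1 i) := by
    intro i
    exact dotp_comb lam (v i) ((M k).1 i) ((M' k).1 i)
  simp only [h, comb_snd]
  rw [Finset.sum_add_distrib, ← Finset.mul_sum, ← Finset.mul_sum]
  ring

lemma bwWo_comb (lam : ℝ) (M M' : Menu m n K) (v) (i) (k) :
    bwWo (comb lam M M') v i k = lam * bwWo M v i k + (1 - lam) * bwWo M' v i k := by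
  unfold bwWo
  have h : ∀ l, dotp (v l) (((comb lam M M') k).1 l) =
      lam * dotp (v l) ((M k).1 l) + (1 - lam) * dotp (v l) ((M' k).1 l) := by
    intro l
    exact dotp_comb lam (v l) ((M k).1 l) ((M' k).1 l)
  simp only [h, comb_snd]
  rw [Finset.sum_add_distrib, ← Finset.mul_sum, ← Finset.mul_sum]
  ring

lemma IsMenu_comb {lam : ℝ} (h0 : 0 ≤ lam) (h1 : lam ≤ 1) {M M' : Menu m n K}
    (hM : IsMenu M) (hM' : IsMenu M') : IsMenu (comb lam M M') := by
  refine ⟨fun k i j => ?_, fun k j => ?_, ?_⟩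
  · have a1 := hM.1 k i j
    have a2 := hM'.1 k i j
    constructor
    · have := mul_nonneg h0 a1.1
      have := mul_nonneg (by linarith : (0:ℝ) ≤ 1 - lam) a2.1
      show 0 ≤ lam * (M k).1 i j + (1 - lam) * (M' k).1 i j
      linarith
    · show lam * (M k).1 i j + (1 - lam) * (M' k).1 i j ≤ 1
      nlinarith [a1.1, a1.2, a2.1, a2.2]
  · show ∑ i, (lam * (M k).1 i j + (1 - lam) * (M' k).1 i j) ≤ 1
    rw [Finset.sum_add_distrib, ← Finset.mul_sum, ← Finset.mul_sum]
    have b1 := hM.2.1 k j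
    have b2 := hM'.2.1 k j
    nlinarith
  · have e1 := hM.2.2
    have e2 := hM'.2.2
    show comb lam M M' 0 = 0
    unfold comb
    rw [e1, e2]
    refine Prod.ext ?_ ?_
    · funext i j; simp
    · simp

/-! ### Comparison lemma -/

lemma pay_ge {M N : Menu m n K} {v}
    (hub : ∀ s, bw N v s ≤ W M v)
    (hubWo : ∀ i s, bwWo N v i s ≤ WWo M v i)
    (hk : ∃ k, bw N v k = W M v ∧ (N k).2 = minBeta M v)
    (hkWo : ∀ i, ∃ k, bwWo N v i k = WWo M v i) :
    pay M v ≤ pay N v := by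
  obtain ⟨k, hk1, hk2⟩ := hk
  have hW : W N v = W M v := by
    refine le_antisymm (W_le hub) ?_
    rw [← hk1]; exact bw_le_W N v k
  have hWo : ∀ i, WWo N v i = WWo M v i := by
    intro i
    obtain ⟨k', hk'⟩ := hkWo i
    refine le_antisymm (WWo_le (hubWo i)) ?_
    rw [← hk']; exact bwWo_le_WWo N v i k'
  have hmb : minBeta N v ≤ minBeta M v := by
    rw [← hk2]
    exact minBeta_le (by rw [hk1, hW])
  unfold pay
  rw [hW]
  have hsum : ∑ i, WWo N v i = ∑ i, WWo M v i :=
    Finset.sum_congr rfl fun i _ => hWo i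
  rw [hsum]
  linarith

lemma convex_le {a b c lam : ℝ} (ha : a ≤ c) (hb : b ≤ c) (h0 : 0 ≤ lam) (h1 : lam ≤ 1) :
    lam * a + (1 - lam) * b ≤ c := by nlinarith

/-! ### Product (piece 2) lemma -/

lemma pay_comb_product {D₁ D₂ : Menu m n K}
    (hQ3 : ∀ a b, ∃ s, D₁ s = D₁ a ∧ D₂ s = D₂ b)
    {t : ℝ} (ht0 : 0 ≤ t) (ht1 : t ≤ 1) (v) :
    pay (comb t D₁ D₂) v = t * pay D₁ v + (1 - t) * pay D₂ v := by
  rcases eq_or_lt_of_le ht0 with h0 | h0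
  · rw [← h0, comb_zero]; ring
  rcases eq_or_lt_of_le ht1 with h1 | h1
  · rw [h1, comb_one]; ring
  set N := comb t D₁ D₂ with hN
  have hbwN : ∀ s, bw N v s = t * bw D₁ v s + (1 - t) * bw D₂ v s :=
    fun s => bw_comb t D₁ D₂ v s
  have hbwWoN : ∀ i s, bwWo N v i s = t * bwWo D₁ v i s + (1 - t) * bwWo D₂ v i s :=
    fun i s => bwWo_comb t D₁ D₂ v i s
  have hW : W N v = t * W D₁ v + (1 - t) * W D₂ v := by
    refine le_antisymm (W_le fun s => ?_) ?_
    · rw [hbwN s]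
      exact add_le_add (mul_le_mul_of_nonneg_left (bw_le_W D₁ v s) ht0)
        (mul_le_mul_of_nonneg_left (bw_le_W D₂ v s) (by linarith))
    · obtain ⟨k₁, hk₁⟩ := exists_bw_eq_W D₁ v
      obtain ⟨k₂, hk₂⟩ := exists_bw_eq_W D₂ v
      obtain ⟨s, hs1, hs2⟩ := hQ3 k₁ k₂
      have e1 : bw D₁ v s = W D₁ v := by unfold bw; rw [hs1]; exact hk₁
      have e2 : bw D₂ v s = W D₂ v := by unfold bw; rw [hs2]; exact hk₂
      calc t * W D₁ v + (1 - t) * W D₂ v = bw N v s := by rw [hbwN s, e1, e2]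
        _ ≤ W N v := bw_le_W N v s
  have hWo : ∀ i, WWo N v i = t * WWo D₁ v i + (1 - t) * WWo D₂ v i := by
    intro i
    refine le_antisymm (WWo_le fun s => ?_) ?_
    · rw [hbwWoN i s]
      exact add_le_add (mul_le_mul_of_nonneg_left (bwWo_le_WWo D₁ v i s) ht0)
        (mul_le_mul_of_nonneg_left (bwWo_le_WWo D₂ v i s) (by linarith))
    · obtain ⟨k₁, hk₁⟩ := exists_bwWo_eq_WWo D₁ v i
      obtain ⟨k₂, hk₂⟩ := exists_bwWo_eq_WWo D₂ v i
      obtain ⟨s, hs1, hs2⟩ := hQ3 k₁ k₂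
      have e1 : bwWo D₁ v i s = WWo D₁ v i := by unfold bwWo; rw [hs1]; exact hk₁
      have e2 : bwWo D₂ v i s = WWo D₂ v i := by unfold bwWo; rw [hs2]; exact hk₂
      calc t * WWo D₁ v i + (1 - t) * WWo D₂ v i = bwWo N v i s := by rw [hbwWoN i s, e1, e2]
        _ ≤ WWo N v i := bwWo_le_WWo N v i s
  have hmb : minBeta N v = t * minBeta D₁ v + (1 - t) * minBeta D₂ v := by
    refine le_antisymm ?_ ?_
    · obtain ⟨k₁, hk₁, hb₁⟩ := minBeta_mem D₁ v
      obtain ⟨k₂, hk₂, hb₂⟩ := minBeta_mem D₂ v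
      obtain ⟨s, hs1, hs2⟩ := hQ3 k₁ k₂
      have e1 : bw D₁ v s = W D₁ v := by unfold bw; rw [hs1]; exact hk₁
      have e2 : bw D₂ v s = W D₂ v := by unfold bw; rw [hs2]; exact hk₂
      have hmax : bw N v s = W N v := by rw [hbwN s, e1, e2, hW]
      have := minBeta_le hmax
      have eb : (N s).2 = t * minBeta D₁ v + (1 - t) * minBeta D₂ v := by
        rw [hN, comb_snd]
        have : (D₁ s).2 = minBeta D₁ v := by rw [hs1]; exact hb₁
        have : (D₂ s).2 = minBeta D₂ v := by rw [hs2]; exact hb₂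
        rw [show (D₁ s).2 = minBeta D₁ v from by rw [hs1]; exact hb₁,
          show (D₂ s).2 = minBeta D₂ v from by rw [hs2]; exact hb₂]
      rw [eb] at this
      exact this
    · refine le_minBeta fun s hs => ?_
      rw [hbwN s, hW] at hs
      have b1 : bw D₁ v s ≤ W D₁ v := bw_le_W D₁ v s
      have b2 : bw D₂ v s ≤ W D₂ v := bw_le_W D₂ v s
      have e1 : bw D₁ v s = W D₁ v := by nlinarith
      have e2 : bw D₂ v s = W D₂ v := by nlinarith
      have m1 := minBeta_le e1
      have m2 := minBeta_le e2
      rw [comb_snd]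
      have h1t : (0:ℝ) ≤ 1 - t := by linarith
      nlinarith
  unfold pay
  rw [hW, hmb]
  have hsum : ∑ i, WWo N v i = t * (∑ i, WWo D₁ v i) + (1 - t) * (∑ i, WWo D₂ v i) := by
    rw [Finset.mul_sum, Finset.mul_sum, ← Finset.sum_add_distrib]
    exact Finset.sum_congr rfl fun i _ => hWo i
  rw [hsum]
  ring


/-! ### Measurability -/

lemma measurable_finset_sup' {α : Type*} [MeasurableSpace α] {ι : Type*}
    (s : Finset ι) (hs : s.Nonempty) (f : ι → α → ℝ) (hf : ∀ i, Measurable (f i)) :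
    Measurable fun a => s.sup' hs fun i => f i a := by
  induction hs using Finset.Nonempty.cons_induction with
  | singleton a => simpa using hf a
  | cons a s h hs ih =>
      simp only [Finset.sup'_cons hs]
      exact (hf a).sup ih

lemma measurable_finset_inf' {α : Type*} [MeasurableSpace α] {ι : Type*}
    (s : Finset ι) (hs : s.Nonempty) (f : ι → α → ℝ) (hf : ∀ i, Measurable (f i)) :
    Measurable fun a => s.inf' hs fun i => f i a := by
  induction hs using Finset.Nonempty.cons_induction with
  | singleton a => simpa using hf a
  | cons a s h hs ih =>
      simp only [Finset.inf'_cons hs]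
      exact (hf a).inf ih

lemma measurable_bw (M : Menu m n K) (k) : Measurable fun v : Fin m → Fin n → ℝ => bw M v k := by
  unfold bw dotp
  apply Measurable.add_const
  apply Finset.measurable_sum
  intro i _
  apply Finset.measurable_sum
  intro j _
  exact ((measurable_pi_apply j).comp (measurable_pi_apply i)).mul_const _

lemma measurable_bwWo (M : Menu m n K) (i) (k) :
    Measurable fun v : Fin m → Fin n → ℝ => bwWo M v i k := by
  unfold bwWo dotp
  apply Measurable.add_const
  apply Finset.measurable_sum
  intro l _
  apply Finset.measurable_sum
  intro j _
  exact ((measurable_pi_apply j).comp (measurable_pi_apply l)).mul_const _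

lemma measurable_W (M : Menu m n K) : Measurable fun v : Fin m → Fin n → ℝ => W M v :=
  measurable_finset_sup' _ _ (fun k v => bw M v k) (measurable_bw M)

lemma measurable_WWo (M : Menu m n K) (i) :
    Measurable fun v : Fin m → Fin n → ℝ => WWo M v i :=
  measurable_finset_sup' _ _ (fun k v => bwWo M v i k) (measurable_bwWo M i)

lemma minBeta_eq_inf' (M : Menu m n K) (v) :
    minBeta M v = Finset.univ.inf' Finset.univ_nonempty
      (fun k => if bw M v k = W M v then (M k).2
        else Finset.univ.sup' Finset.univ_nonempty (fun k' => (M k').2)) := by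
  classical
  refine le_antisymm ?_ ?_
  · obtain ⟨k₀, hk₀mem, hk₀⟩ := Finset.exists_mem_eq_inf' (Finset.univ_nonempty)
      (fun k : Fin (K+1) => if bw M v k = W M v then (M k).2
        else Finset.univ.sup' Finset.univ_nonempty (fun k' => (M k').2))
    rw [hk₀]
    by_cases h : bw M v k₀ = W M v
    · rw [if_pos h]; exact minBeta_le h
    · rw [if_neg h]
      obtain ⟨k, hk, hb⟩ := minBeta_mem M v
      calc minBeta M v = (M k).2 := hb.symm
        _ ≤ _ := Finset.le_sup' (fun k' => (M k').2) (Finset.mem_univ k)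
  · obtain ⟨k, hk, hb⟩ := minBeta_mem M v
    have h2 := Finset.inf'_le
      (fun k' : Fin (K+1) => if bw M v k' = W M v then (M k').2
        else Finset.univ.sup' Finset.univ_nonempty (fun k'' => (M k'').2))
      (Finset.mem_univ k)
    rw [if_pos hk] at h2
    rw [← hb]
    exact h2

lemma measurable_minBeta (M : Menu m n K) :
    Measurable fun v : Fin m → Fin n → ℝ => minBeta M v := by
  classical
  have : (fun v : Fin m → Fin n → ℝ => minBeta M v) =
      fun v => Finset.univ.inf' Finset.univ_nonempty
        (fun k => if bw M v k = W M v then (M k).2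
          else Finset.univ.sup' Finset.univ_nonempty (fun k' => (M k').2)) := by
    funext v; exact minBeta_eq_inf' M v
  rw [this]
  exact measurable_finset_inf' Finset.univ Finset.univ_nonempty
    (fun k v => if bw M v k = W M v then (M k).2
      else Finset.univ.sup' Finset.univ_nonempty (fun k' => (M k').2))
    (fun k => Measurable.ite (measurableSet_eq_fun (measurable_bw M k) (measurable_W M))
      measurable_const measurable_const)

lemma measurable_pay (M : Menu m n K) : Measurable fun v : Fin m → Fin n → ℝ => pay M v := by
  unfold pay
  exact (((Finset.measurable_sum _ fun i _ => measurable_WWo M i).sub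
    ((measurable_W M).const_mul _)).sub (measurable_minBeta M))

lemma measurableSet_VP : MeasurableSet (VP m n) := by
  have : VP m n = ⋂ i, ((⋂ j, ({v : Fin m → Fin n → ℝ | 0 ≤ v i j} ∩ {v | v i j ≤ 1}))
      ∩ {v | ∑ j, v i j ≤ 1}) := by
    ext v
    simp only [VP, Set.mem_setOf_eq, Set.mem_iInter, Set.mem_inter_iff]
    try tauto
  rw [this]
  refine MeasurableSet.iInter fun i => MeasurableSet.inter
    (MeasurableSet.iInter fun j => MeasurableSet.inter ?_ ?_) ?_
  · exact measurableSet_le measurable_const ((measurable_pi_apply j).comp (measurable_pi_apply i))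
  · exact measurableSet_le ((measurable_pi_apply j).comp (measurable_pi_apply i)) measurable_const
  · exact measurableSet_le (Finset.measurable_sum _ fun j _ =>
      (measurable_pi_apply j).comp (measurable_pi_apply i)) measurable_const

lemma measurableSet_goodEvent (M : Menu m n K) (K' : Finset (Fin (K + 1))) :
    MeasurableSet {v | GoodEvent M K' v} := by
  classical
  have hA : MeasurableSet {v : Fin m → Fin n → ℝ |
      ∃ k ∈ K', bw M v k = W M v ∧ (M k).2 = minBeta M v} := by
    have : {v : Fin m → Fin n → ℝ | ∃ k ∈ K', bw M v k = W M v ∧ (M k).2 = minBeta M v}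
        = ⋃ k : Fin (K+1), {v | k ∈ K' ∧ (bw M v k = W M v ∧ (M k).2 = minBeta M v)} := by
      ext v; simp [Set.mem_iUnion]
    rw [this]
    refine MeasurableSet.iUnion fun k => ?_
    by_cases hk : k ∈ K'
    · simp only [hk, true_and]
      exact (measurableSet_eq_fun (measurable_bw M k) (measurable_W M)).inter
        (measurableSet_eq_fun measurable_const (measurable_minBeta M))
    · simp only [hk, false_and]
      exact MeasurableSet.empty
  have hB : MeasurableSet {v : Fin m → Fin n → ℝ |
      ∀ i : Fin m, ∃ k ∈ K', bwWo M v i k = WWo M v i} := by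
    have : {v : Fin m → Fin n → ℝ | ∀ i : Fin m, ∃ k ∈ K', bwWo M v i k = WWo M v i}
        = ⋂ i : Fin m, ⋃ k : Fin (K+1), {v | k ∈ K' ∧ bwWo M v i k = WWo M v i} := by
      ext v; simp [Set.mem_iInter, Set.mem_iUnion]
    rw [this]
    refine MeasurableSet.iInter fun i => MeasurableSet.iUnion fun k => ?_
    by_cases hk : k ∈ K'
    · simp only [hk, true_and]
      exact measurableSet_eq_fun (measurable_bwWo M i k) (measurable_WWo M i)
    · simp only [hk, false_and]
      exact MeasurableSet.empty
  have : {v | GoodEvent M K' v} = {v : Fin m → Fin n → ℝ |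
      ∃ k ∈ K', bw M v k = W M v ∧ (M k).2 = minBeta M v} ∩
      {v | ∀ i : Fin m, ∃ k ∈ K', bwWo M v i k = WWo M v i} := rfl
  rw [this]
  exact hA.inter hB

/-! ### Integrability and revenue comparison -/

section Integral

variable (F : Measure (Fin m → Fin n → ℝ)) [IsProbabilityMeasure F]

lemma ae_mem_VP (hFV : F (VP m n) = 1) : ∀ᵐ v ∂F, v ∈ VP m n := by
  rw [MeasureTheory.ae_iff]
  have : {v : Fin m → Fin n → ℝ | ¬ v ∈ VP m n} = (VP m n)ᶜ := rfl
  rw [this, measure_compl measurableSet_VP (measure_ne_top F _), hFV, measure_univ]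
  simp

lemma integrable_pay {M : Menu m n K} (hM : IsMenu M) (hFV : F (VP m n) = 1) :
    Integrable (pay M) F := by
  refine Integrable.mono' (integrable_const (m : ℝ)) (measurable_pay M).aestronglyMeasurable ?_
  filter_upwards [ae_mem_VP F hFV] with v hv
  rw [Real.norm_eq_abs, abs_le]
  constructor
  · have h1 := pay_nonneg (M := M) (v := v)
    have h2 : (0:ℝ) ≤ m := Nat.cast_nonneg m
    linarith
  · exact pay_le hM hv

lemma rev_ge {M N : Menu m n K} (hM : IsMenu M) (hN : IsMenu N)
    (hFV : F (VP m n) = 1) {G : Set (Fin m → Fin n → ℝ)} (hGm : MeasurableSet G)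
    {ε : ℝ} (hm : 0 < m) (hG : (F G).toReal ≥ 1 - ε / (m : ℝ))
    (hpt : ∀ v ∈ VP m n, v ∈ G → pay M v ≤ pay N v) :
    Rev F M - ε ≤ Rev F N := by
  have hm' : (0:ℝ) < m := by exact_mod_cast hm
  have hcompl : (F Gᶜ).toReal = 1 - (F G).toReal := by
    rw [measure_compl hGm (measure_ne_top F _), measure_univ]
    rw [ENNReal.toReal_sub_of_le prob_le_one (by simp)]
    simp
  have hc : (F Gᶜ).toReal ≤ ε / m := by rw [hcompl]; linarith
  have hc0 : 0 ≤ (F Gᶜ).toReal := ENNReal.toReal_nonneg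
  have hindint : Integrable (Set.indicator Gᶜ fun _ => (m : ℝ)) F :=
    (integrable_const ((m : ℝ))).indicator hGm.compl
  have key : ∀ᵐ v ∂F, pay M v - Set.indicator Gᶜ (fun _ => (m : ℝ)) v ≤ pay N v := by
    filter_upwards [ae_mem_VP F hFV] with v hv
    by_cases hvG : v ∈ G
    · have : Set.indicator Gᶜ (fun _ => (m : ℝ)) v = 0 :=
        Set.indicator_of_notMem (by simpa using hvG) _
      rw [this]
      have := hpt v hv hvG
      linarith
    · have : Set.indicator Gᶜ (fun _ => (m : ℝ)) v = m :=
        Set.indicator_of_mem (by simpa using hvG) _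
      rw [this]
      have h1 := pay_le hM hv
      have h2 := pay_nonneg (M := N) (v := v)
      linarith
  have hmono := integral_mono_ae
    ((integrable_pay F hM hFV).sub hindint) (integrable_pay F hN hFV) key
  simp only [Pi.sub_apply] at hmono
  rw [integral_sub (integrable_pay F hM hFV) hindint] at hmono
  rw [integral_indicator_const ((m : ℝ)) hGm.compl] at hmono
  have : (F Gᶜ).toReal * m ≤ ε := by
    calc (F Gᶜ).toReal * m ≤ (ε / m) * m := by nlinarith
      _ = ε := div_mul_cancel₀ ε (ne_of_gt hm')
  unfold Rev
  simp only [smul_eq_mul] at hmono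
  have hreal : F.real Gᶜ = (F Gᶜ).toReal := rfl
  rw [hreal] at hmono
  have hfin : ∫ v, pay M v ∂F - (F Gᶜ).toReal * m ≤ ∫ v, pay N v ∂F := hmono
  linarith

lemma rev_comb_product {D₁ D₂ : Menu m n K} (hD₁ : IsMenu D₁) (hD₂ : IsMenu D₂)
    (hFV : F (VP m n) = 1)
    (hQ3 : ∀ a b, ∃ s, D₁ s = D₁ a ∧ D₂ s = D₂ b)
    {t : ℝ} (ht0 : 0 ≤ t) (ht1 : t ≤ 1) :
    Rev F (comb t D₁ D₂) = t * Rev F D₁ + (1 - t) * Rev F D₂ := by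
  unfold Rev
  have heq : (fun v => pay (comb t D₁ D₂) v)
      = fun v => t * pay D₁ v + (1 - t) * pay D₂ v := by
    funext v; exact pay_comb_product hQ3 ht0 ht1 v
  rw [show ∫ v, pay (comb t D₁ D₂) v ∂F = ∫ v, (t * pay D₁ v + (1 - t) * pay D₂ v) ∂F from by
    rw [heq]]
  rw [integral_add ((integrable_pay F hD₁ hFV).const_mul t)
    ((integrable_pay F hD₂ hFV).const_mul (1 - t))]
  rw [integral_const_mul, integral_const_mul]

end Integral

/-! ### Combinatorial pairing -/

lemma exists_injOn_finset {α β : Type*} [DecidableEq α] [DecidableEq β] [Nonempty β]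
    (s : Finset α) (t : Finset β) (h : s.card ≤ t.card) :
    ∃ f : α → β, Set.InjOn f ↑s ∧ ∀ a ∈ s, f a ∈ t := by
  classical
  obtain ⟨u, hut, huc⟩ := t.exists_subset_card_eq h
  have hcard : s.card = u.card := huc.symm
  let e : {x // x ∈ s} ≃ {x // x ∈ u} := Finset.equivOfCardEq hcard
  refine ⟨fun a => if h : a ∈ s then (e ⟨a, h⟩ : β) else Classical.arbitrary β, ?_, ?_⟩
  · intro a ha b hb hab
    simp only [Finset.mem_coe] at ha hb
    have hab' : (e ⟨a, ha⟩ : β) = (e ⟨b, hb⟩ : β) := by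
      simpa only [dif_pos ha, dif_pos hb] using hab
    have h2 := e.injective (Subtype.coe_injective hab')
    exact Subtype.mk_eq_mk.mp h2
  · intro a ha
    simpa only [dif_pos ha] using hut (e ⟨a, ha⟩).2

lemma exists_pairing (s₁ s₂ : Finset (Fin (K+1))) (h1 : (0 : Fin (K+1)) ∈ s₁)
    (h2 : (0 : Fin (K+1)) ∈ s₂) (hc : s₁.card * s₂.card ≤ K + 1) :
    ∃ r : Fin (K+1) → Fin (K+1) × Fin (K+1),
      (∀ k ∈ s₁, (r k).1 = k) ∧ (∀ k ∈ s₂, (r k).2 = k) ∧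
      (∀ a b, ∃ s, (r s).1 = (r a).1 ∧ (r s).2 = (r b).2) := by
  classical
  set P : Finset (Fin (K+1) × Fin (K+1)) := s₁ ×ˢ s₂ with hP
  -- the "special" pairs and their placement
  set sp : Fin (K+1) → Fin (K+1) × Fin (K+1) :=
    fun k => if k ∈ s₂ then (if k ∈ s₁ then (k, k) else (0, k)) else (k, 0) with hsp
  set ψ : Fin (K+1) × Fin (K+1) → Fin (K+1) := fun p => if p.1 = 0 then p.2 else p.1 with hψ
  have hψsp : ∀ k ∈ s₁ ∪ s₂, ψ (sp k) = k := by
    intro k hk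
    by_cases hk2 : k ∈ s₂
    · by_cases hk1 : k ∈ s₁
      · simp [hsp, hψ, hk1, hk2]
      · simp [hsp, hψ, hk1, hk2]
    · have hk1 : k ∈ s₁ := by
        rcases Finset.mem_union.mp hk with h | h
        · exact h
        · exact absurd h hk2
      have hk0 : k ≠ 0 := fun h => hk2 (h ▸ h2)
      simp [hsp, hψ, hk2, hk0]
  have hsp_mem : ∀ k ∈ s₁ ∪ s₂, sp k ∈ P := by
    intro k hk
    by_cases hk2 : k ∈ s₂
    · by_cases hk1 : k ∈ s₁
      · simp [hsp, hP, hk1, hk2, Finset.mem_product]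
      · simp [hsp, hP, hk1, hk2, Finset.mem_product, h1]
    · have hk1 : k ∈ s₁ := by
        rcases Finset.mem_union.mp hk with h | h
        · exact h
        · exact absurd h hk2
      simp [hsp, hP, hk1, hk2, Finset.mem_product, h2]
  set Sp : Finset (Fin (K+1) × Fin (K+1)) := (s₁ ∪ s₂).image sp with hSp
  have hSp_sub : Sp ⊆ P := by
    intro p hp
    obtain ⟨k, hk, rfl⟩ := Finset.mem_image.mp hp
    exact hsp_mem k hk
  have hψSp : ∀ p ∈ Sp, ψ p ∈ s₁ ∪ s₂ := by
    intro p hp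
    obtain ⟨k, hk, rfl⟩ := Finset.mem_image.mp hp
    rw [hψsp k hk]; exact hk
  have hcardSp : Sp.card = (s₁ ∪ s₂).card := by
    apply Finset.card_image_of_injOn
    intro a ha b hb hab
    rw [← hψsp a ha, ← hψsp b hb, hab]
  have hcard : (P \ Sp).card ≤ ((Finset.univ : Finset (Fin (K+1))) \ (s₁ ∪ s₂)).card := by
    rw [Finset.card_sdiff_of_subset hSp_sub, Finset.card_sdiff_of_subset (Finset.subset_univ _),
      Finset.card_univ, Fintype.card_fin, hcardSp, hP, Finset.card_product]
    exact Nat.sub_le_sub_right hc _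
  obtain ⟨f, hfinj, hfmem⟩ := exists_injOn_finset (P \ Sp)
    ((Finset.univ : Finset (Fin (K+1))) \ (s₁ ∪ s₂)) hcard
  set ι : Fin (K+1) × Fin (K+1) → Fin (K+1) :=
    fun p => if p ∈ Sp then ψ p else f p with hι
  have hι_sp : ∀ k ∈ s₁ ∪ s₂, ι (sp k) = k := by
    intro k hk
    rw [hι]
    simp only [show sp k ∈ Sp from Finset.mem_image.mpr ⟨k, hk, rfl⟩, if_pos]
    exact hψsp k hk
  have hι_inj : Set.InjOn ι ↑P := by
    intro p hp q hq hpq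
    simp only [Finset.mem_coe] at hp hq
    by_cases hpS : p ∈ Sp <;> by_cases hqS : q ∈ Sp
    · obtain ⟨a, ha, rfl⟩ := Finset.mem_image.mp hpS
      obtain ⟨b, hb, rfl⟩ := Finset.mem_image.mp hqS
      rw [hι] at hpq
      simp only [show sp a ∈ Sp from Finset.mem_image.mpr ⟨a, ha, rfl⟩, show sp b ∈ Sp from Finset.mem_image.mpr ⟨b, hb, rfl⟩,
        if_pos] at hpq
      rw [hψsp a ha, hψsp b hb] at hpq
      rw [hpq]
    · exfalso
      rw [hι] at hpq
      simp only [hpS, hqS, if_pos, if_neg, if_true, if_false] at hpq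
      have h1' := hψSp p hpS
      have h2' : f q ∈ Finset.univ \ (s₁ ∪ s₂) :=
        hfmem q (Finset.mem_sdiff.mpr ⟨hq, hqS⟩)
      rw [hpq] at h1'
      exact (Finset.mem_sdiff.mp h2').2 h1'
    · exfalso
      rw [hι] at hpq
      simp only [hpS, hqS, if_pos, if_neg, if_true, if_false] at hpq
      have h1' := hψSp q hqS
      have h2' : f p ∈ Finset.univ \ (s₁ ∪ s₂) :=
        hfmem p (Finset.mem_sdiff.mpr ⟨hp, hpS⟩)
      rw [← hpq] at h1'
      exact (Finset.mem_sdiff.mp h2').2 h1'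
    · rw [hι] at hpq
      simp only [hpS, hqS, if_neg, if_false] at hpq
      exact hfinj (Finset.mem_coe.mpr (Finset.mem_sdiff.mpr ⟨hp, hpS⟩))
        (Finset.mem_coe.mpr (Finset.mem_sdiff.mpr ⟨hq, hqS⟩)) hpq
  set r : Fin (K+1) → Fin (K+1) × Fin (K+1) :=
    fun s => if h : ∃ p ∈ P, ι p = s then h.choose else (0, 0) with hr
  have hr_inv : ∀ p ∈ P, r (ι p) = p := by
    intro p hp
    have hex : ∃ q ∈ P, ι q = ι p := ⟨p, hp, rfl⟩
    rw [hr]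
    simp only [dif_pos hex]
    exact hι_inj (Finset.mem_coe.mpr hex.choose_spec.1) (Finset.mem_coe.mpr hp)
      hex.choose_spec.2
  have hr_mem : ∀ s, r s ∈ P := by
    intro s
    rw [hr]
    by_cases h : ∃ p ∈ P, ι p = s
    · simp only [dif_pos h]; exact h.choose_spec.1
    · simp only [dif_neg h]
      rw [hP]; exact Finset.mem_product.mpr ⟨h1, h2⟩
  have hrsp : ∀ k ∈ s₁ ∪ s₂, r k = sp k := by
    intro k hk
    have := hr_inv (sp k) (hsp_mem k hk)
    rwa [hι_sp k hk] at this
  refine ⟨r, ?_, ?_, ?_⟩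
  · intro k hk
    rw [hrsp k (Finset.mem_union_left _ hk)]
    by_cases hk2 : k ∈ s₂
    · simp [hsp, hk2, hk]
    · simp [hsp, hk2]
  · intro k hk
    rw [hrsp k (Finset.mem_union_right _ hk)]
    by_cases hk1 : k ∈ s₁
    · simp [hsp, hk1, hk]
    · simp [hsp, hk1, hk]
  · intro a b
    have hmem : ((r a).1, (r b).2) ∈ P := by
      rw [hP]
      exact Finset.mem_product.mpr
        ⟨(Finset.mem_product.mp (hr_mem a)).1, (Finset.mem_product.mp (hr_mem b)).2⟩
    refine ⟨ι ((r a).1, (r b).2), ?_, ?_⟩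
    · rw [hr_inv _ hmem]
    · rw [hr_inv _ hmem]

/-! ### The side pieces -/

lemma pay_le_comb_reindex {M : Menu m n K} {K' : Finset (Fin (K+1))}
    {σ τ : Fin (K+1) → Fin (K+1)} (hσ : ∀ k ∈ K', σ k = k) (hτ : ∀ k ∈ K', τ k = k)
    {v} (hg : GoodEvent M K' v) {lam : ℝ} (h0 : 0 ≤ lam) (h1 : lam ≤ 1) :
    pay M v ≤ pay (comb lam (fun s => M (σ s)) (fun s => M (τ s))) v := by
  obtain ⟨⟨k₁, hk₁mem, hk₁w, hk₁b⟩, hg2⟩ := hg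
  refine pay_ge ?_ ?_ ⟨k₁, ?_, ?_⟩ ?_
  · intro s
    rw [bw_comb]
    exact convex_le (bw_le_W M v (σ s)) (bw_le_W M v (τ s)) h0 h1
  · intro i s
    rw [bwWo_comb]
    exact convex_le (bwWo_le_WWo M v i (σ s)) (bwWo_le_WWo M v i (τ s)) h0 h1
  · rw [bw_comb]
    have e1 : bw (fun s => M (σ s) : Menu m n K) v k₁ = bw M v k₁ := by
      have : bw (fun s => M (σ s) : Menu m n K) v k₁ = bw M v (σ k₁) := rfl
      rw [this, hσ k₁ hk₁mem]
    have e2 : bw (fun s => M (τ s) : Menu m n K) v k₁ = bw M v k₁ := by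
      have : bw (fun s => M (τ s) : Menu m n K) v k₁ = bw M v (τ k₁) := rfl
      rw [this, hτ k₁ hk₁mem]
    rw [e1, e2, hk₁w]
    ring
  · rw [comb_snd]
    have e1 : ((fun s => M (σ s) : Menu m n K) k₁).2 = (M k₁).2 := by
      have : ((fun s => M (σ s) : Menu m n K) k₁).2 = (M (σ k₁)).2 := rfl
      rw [this, hσ k₁ hk₁mem]
    have e2 : ((fun s => M (τ s) : Menu m n K) k₁).2 = (M k₁).2 := by
      have : ((fun s => M (τ s) : Menu m n K) k₁).2 = (M (τ k₁)).2 := rfl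
      rw [this, hτ k₁ hk₁mem]
    rw [e1, e2, hk₁b]
    ring
  · intro i
    obtain ⟨k, hkmem, hkeq⟩ := hg2 i
    refine ⟨k, ?_⟩
    rw [bwWo_comb]
    have e1 : bwWo (fun s => M (σ s) : Menu m n K) v i k = bwWo M v i k := by
      have : bwWo (fun s => M (σ s) : Menu m n K) v i k = bwWo M v i (σ k) := rfl
      rw [this, hσ k hkmem]
    have e2 : bwWo (fun s => M (τ s) : Menu m n K) v i k = bwWo M v i k := by
      have : bwWo (fun s => M (τ s) : Menu m n K) v i k = bwWo M v i (τ k) := rfl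
      rw [this, hτ k hkmem]
    rw [e1, e2, hkeq]
    ring

/-- If two AMA menus `M₁`, `M₂` (indexed by `{0,…,K}`) are
`ε`-reducible, then they are `ε`-mode-connected via a piecewise linear path with five
linear pieces. -/
theorem statement14 {m n K : ℕ} (hm : 0 < m) (F : Measure (Fin m → Fin n → ℝ))
    [IsProbabilityMeasure F] (hFV : F (VP m n) = 1) (ε : ℝ)
    (M₁ M₂ : Menu m n K) (hM₁ : IsMenu M₁) (hM₂ : IsMenu M₂)
    (hr₁ : Reducible F M₁ ε) (hr₂ : Reducible F M₂ ε) :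
    PLConnected F M₁ M₂ ε 5 := by
  classical
  obtain ⟨s₁, h01, hc₁, hG₁⟩ := hr₁
  obtain ⟨s₂, h02, hc₂, hG₂⟩ := hr₂
  have hmR : (0:ℝ) < (m:ℝ) := by exact_mod_cast hm
  -- ε is nonnegative
  have hε : 0 ≤ ε := by
    have hle : (F {v | GoodEvent M₁ s₁ v}).toReal ≤ 1 := by
      have h := ENNReal.toReal_mono (by simp : (1 : ENNReal) ≠ ⊤)
        (prob_le_one (μ := F) (s := {v | GoodEvent M₁ s₁ v}))
      simpa using h
    rcases le_or_gt 0 ε with h | h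
    · exact h
    · exfalso
      have : ε / (m:ℝ) < 0 := div_neg_of_neg_of_pos h hmR
      linarith
  -- the pairing
  have hcard : s₁.card * s₂.card ≤ K + 1 := by
    have hs : (0:ℝ) ≤ Real.sqrt (K+1) := Real.sqrt_nonneg _
    have hmul : (s₁.card : ℝ) * (s₂.card : ℝ) ≤ Real.sqrt (K+1) * Real.sqrt (K+1) :=
      mul_le_mul hc₁ hc₂ (Nat.cast_nonneg _) hs
    rw [Real.mul_self_sqrt (by positivity)] at hmul
    have : ((s₁.card * s₂.card : ℕ) : ℝ) ≤ ((K + 1 : ℕ) : ℝ) := by push_cast; push_cast at hmul; linarith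
    exact_mod_cast this
  obtain ⟨r, hrfst, hrsnd, hrprod⟩ := exists_pairing s₁ s₂ h01 h02 hcard
  -- duplicated product menus
  set D₁ : Menu m n K := fun s => M₁ ((r s).1) with hD₁def
  set D₂ : Menu m n K := fun s => M₂ ((r s).2) with hD₂def
  have hD₁ : IsMenu D₁ := by
    refine ⟨fun k i j => hM₁.1 _ i j, fun k j => hM₁.2.1 _ j, ?_⟩
    show M₁ ((r 0).1) = 0
    rw [hrfst 0 h01]
    exact hM₁.2.2
  have hD₂ : IsMenu D₂ := by
    refine ⟨fun k i j => hM₂.1 _ i j, fun k j => hM₂.2.1 _ j, ?_⟩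
    show M₂ ((r 0).2) = 0
    rw [hrsnd 0 h02]
    exact hM₂.2.2
  -- piece 1 : from M₁ to D₁
  have piece1 : ∀ lam : ℝ, 0 ≤ lam → lam ≤ 1 →
      Rev F M₁ - ε ≤ Rev F (comb lam M₁ D₁) := by
    intro lam h0 h1
    refine rev_ge F hM₁ (IsMenu_comb h0 h1 hM₁ hD₁) hFV
      (measurableSet_goodEvent M₁ s₁) hm hG₁ ?_
    intro v _ hvG
    exact pay_le_comb_reindex (σ := fun s => s) (τ := fun s => (r s).1)
      (fun k _ => rfl) (fun k hk => hrfst k hk) hvG h0 h1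
  -- piece 3 : from D₂ to M₂
  have piece3 : ∀ lam : ℝ, 0 ≤ lam → lam ≤ 1 →
      Rev F M₂ - ε ≤ Rev F (comb lam D₂ M₂) := by
    intro lam h0 h1
    refine rev_ge F hM₂ (IsMenu_comb h0 h1 hD₂ hM₂) hFV
      (measurableSet_goodEvent M₂ s₂) hm hG₂ ?_
    intro v _ hvG
    exact pay_le_comb_reindex (σ := fun s => (r s).2) (τ := fun s => s)
      (fun k hk => hrsnd k hk) (fun k _ => rfl) hvG h0 h1
  have hrevD₁ : Rev F M₁ - ε ≤ Rev F D₁ := by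
    have h := piece1 0 le_rfl zero_le_one
    rwa [comb_zero] at h
  have hrevD₂ : Rev F M₂ - ε ≤ Rev F D₂ := by
    have h := piece3 1 zero_le_one le_rfl
    rwa [comb_one] at h
  -- product structure for piece 2
  have hQ3 : ∀ a b, ∃ s, D₁ s = D₁ a ∧ D₂ s = D₂ b := by
    intro a b
    obtain ⟨s, hs1, hs2⟩ := hrprod a b
    exact ⟨s, congrArg M₁ hs1, congrArg M₂ hs2⟩
  set R := min (Rev F M₁) (Rev F M₂) with hR
  have hmin1 : R - ε ≤ Rev F D₁ := by
    have := min_le_left (Rev F M₁) (Rev F M₂)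
    rw [hR]; linarith
  have hmin2 : R - ε ≤ Rev F D₂ := by
    have := min_le_right (Rev F M₁) (Rev F M₂)
    rw [hR]; linarith
  have piece2 : ∀ lam : ℝ, 0 ≤ lam → lam ≤ 1 →
      R - ε ≤ Rev F (comb lam D₁ D₂) := by
    intro lam h0 h1
    rw [rev_comb_product F hD₁ hD₂ hFV hQ3 h0 h1]
    nlinarith [hmin1, hmin2]
  -- assemble the path
  refine ⟨fun i : Fin 6 =>
      if i.val = 0 then M₁ else if i.val = 1 then D₁ else if i.val = 2 then D₂ else M₂,
    by norm_num, by norm_num [Fin.last], ?_, ?_⟩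
  · intro i
    fin_cases i
    · simpa using hM₁
    · simpa using hD₁
    · simpa using hD₂
    · simpa using hM₂
    · simpa using hM₂
    · simpa using hM₂
  · intro i lam hlam
    obtain ⟨h0, h1⟩ := hlam
    fin_cases i
    · show R - ε ≤ Rev F (comb lam M₁ D₁)
      have h := piece1 lam h0 h1
      have hmn := min_le_left (Rev F M₁) (Rev F M₂)
      rw [hR]
      linarith
    · show R - ε ≤ Rev F (comb lam D₁ D₂)
      exact piece2 lam h0 h1
    · show R - ε ≤ Rev F (comb lam D₂ M₂)
      have h := piece3 lam h0 h1
      have hmn := min_le_right (Rev F M₁) (Rev F M₂)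
      rw [hR]
      linarith
    · show R - ε ≤ Rev F (comb lam M₂ M₂)
      rw [comb_self]
      have hmn := min_le_right (Rev F M₁) (Rev F M₂)
      rw [hR]
      linarith
    · show R - ε ≤ Rev F (comb lam M₂ M₂)
      rw [comb_self]
      have hmn := min_le_right (Rev F M₁) (Rev F M₂)
      rw [hR]
      linarith

end AMA
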